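/- Let G be a connected precolored split graph whose vertex set is partitioned into a nonempty clique K and an independent set I. Then there exists a solution of the free flooding game on G of minimum length in which every coloring operation recolors a vertex of K. -/
import Mathlib


open scoped Classical

/-- The set of vertices colored (and merged) by a coloring operation at `v`:
`v` together with all vertices in the same connected component as `v` in the
subgraph induced by the vertices of color `col v`. -/
def floodRegion {V C : Type*} (G : SimpleGraph V) (col : V → C) (v : V) : Set V :=
  {u | ∃ p : G.Walk v u, ∀ w ∈ p.support, col w = col v}

/-- The coloring operation `(v, c)`. -/
noncomputable def floodStep {V C : Type*} (G : SimpleGraph V) (col : V → C)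
    (v : V) (c : C) : V → C :=
  fun u => if u ∈ floodRegion G col v then c else col u

/-- Applying a sequence of coloring operations. -/
noncomputable def floodSeq {V C : Type*} (G : SimpleGraph V) (col : V → C) :
    List (V × C) → V → C
  | [] => col
  | op :: ops => floodSeq G (floodStep G col op.1 op.2) ops

/-- A sequence of coloring operations is a solution of the free flooding game if
applying it makes all vertices of `G` have the same color. -/
def IsFloodSolution {V C : Type*} (G : SimpleGraph V) (col : V → C)
    (ops : List (V × C)) : Prop :=
  ∃ c : C, ∀ u : V, floodSeq G col ops u = c

section Helpers

variable {V C : Type*} {G : SimpleGraph V}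

lemma mem_floodRegion_self (col : V → C) (v : V) : v ∈ floodRegion G col v :=
  ⟨SimpleGraph.Walk.nil, by simp⟩

lemma floodStep_eq_of_mem (col : V → C) {v w : V} (h : w ∈ floodRegion G col v) (c : C) :
    floodStep G col w c = floodStep G col v c := by
  obtain ⟨p, hp⟩ := h
  have hcw : col w = col v := hp w p.end_mem_support
  have hreg : floodRegion G col w = floodRegion G col v := by
    ext u
    constructor
    · rintro ⟨q, hq⟩
      refine ⟨p.append q, fun x hx => ?_⟩
      rw [SimpleGraph.Walk.mem_support_append_iff] at hx
      rcases hx with hx | hx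
      · exact hp x hx
      · rw [hq x hx, hcw]
    · rintro ⟨q, hq⟩
      refine ⟨p.reverse.append q, fun x hx => ?_⟩
      rw [SimpleGraph.Walk.mem_support_append_iff] at hx
      rw [hcw]
      rcases hx with hx | hx
      · exact hp x (by simpa using hx)
      · exact hq x hx
  unfold floodStep
  rw [hreg]

/-- Walk surgery: a monochromatic walk between two vertices distinct from `v ∈ I`
can be rerouted to avoid `v`, using the clique shortcut. -/
lemma exists_avoid_walk (col : V → C) (K I : Set V)
    (hunion : K ∪ I = Set.univ)
    (hclique : G.IsClique K)
    (hindep : ∀ u ∈ I, ∀ w ∈ I, ¬ G.Adj u w) {v : V} (hv : v ∈ I) :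
    ∀ n (w u : V), w ≠ v → u ≠ v →
      ∀ p : G.Walk w u, p.length ≤ n → (∀ x ∈ p.support, col x = col w) →
      ∃ q : G.Walk w u, (∀ x ∈ q.support, col x = col w) ∧ v ∉ q.support := by
  have hK : ∀ {x : V}, G.Adj x v → x ∈ K := by
    intro x hx
    have hxKI : x ∈ K ∪ I := hunion ▸ Set.mem_univ x
    rcases hxKI with h | h
    · exact h
    · exact absurd hx (hindep x h v hv)
  intro n
  induction n with
  | zero =>
    intro w u hw hu p hlen hmono
    cases p with
    | nil => exact ⟨SimpleGraph.Walk.nil, by intro x hx; rw [SimpleGraph.Walk.support_nil, List.mem_singleton] at hx; rw [hx], by simp [Ne.symm hw]⟩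
    | cons h p' => simp [SimpleGraph.Walk.length_cons] at hlen
  | succ n ih =>
    intro w u hw hu p hlen hmono
    cases p with
    | nil => exact ⟨SimpleGraph.Walk.nil, by intro x hx; rw [SimpleGraph.Walk.support_nil, List.mem_singleton] at hx; rw [hx], by simp [Ne.symm hw]⟩
    | cons h p' =>
      rename_i x
      by_cases hx : x = v
      · cases p' with
        | nil => exact absurd hx hu
        | cons h2 p'' =>
          rename_i y
          have hwv : G.Adj w v := hx ▸ h
          have hvy : G.Adj v y := hx ▸ h2
          have hy : y ≠ v := fun hh => (hh ▸ hvy).ne rfl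
          have hwK : w ∈ K := hK hwv
          have hyK : y ∈ K := hK hvy.symm
          have hcy : col y = col w := hmono y (by simp)
          have hlen'' : p''.length ≤ n := by
            simp [SimpleGraph.Walk.length_cons] at hlen; omega
          have hmono'' : ∀ z ∈ p''.support, col z = col y := by
            intro z hz
            rw [hmono z (by simp [hz]), hcy]
          obtain ⟨q'', hq'', hq''v⟩ := ih y u hy hu p'' hlen'' hmono''
          by_cases hwy : w = y
          · subst hwy
            exact ⟨q'', hq'', hq''v⟩
          · refine ⟨SimpleGraph.Walk.cons (hclique hwK hyK hwy) q'', ?_, ?_⟩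
            · intro z hz
              rw [SimpleGraph.Walk.support_cons, List.mem_cons] at hz
              rcases hz with rfl | hz
              · rfl
              · rw [hq'' z hz, hcy]
            · rw [SimpleGraph.Walk.support_cons, List.mem_cons]
              push_neg
              exact ⟨Ne.symm hw, hq''v⟩
      · have hcx : col x = col w := hmono x (by simp)
        have hlen' : p'.length ≤ n := by
          simp [SimpleGraph.Walk.length_cons] at hlen; omega
        have hmono' : ∀ z ∈ p'.support, col z = col x := by
          intro z hz
          rw [hmono z (by simp [hz]), hcx]
        obtain ⟨q', hq', hq'v⟩ := ih x u hx hu p' hlen' hmono'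
        refine ⟨SimpleGraph.Walk.cons h q', ?_, ?_⟩
        · intro z hz
          rw [SimpleGraph.Walk.support_cons, List.mem_cons] at hz
          rcases hz with rfl | hz
          · rfl
          · rw [hq' z hz, hcx]
        · rw [SimpleGraph.Walk.support_cons, List.mem_cons]
          push_neg
          exact ⟨Ne.symm hw, hq'v⟩

lemma floodRegion_transfer (col col' : V → C) (K I : Set V)
    (hunion : K ∪ I = Set.univ)
    (hclique : G.IsClique K)
    (hindep : ∀ u ∈ I, ∀ w ∈ I, ¬ G.Adj u w) {v : V} (hv : v ∈ I)
    (hagree : ∀ u, u ≠ v → col u = col' u) {w u : V} (hw : w ≠ v) (hu : u ≠ v)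
    (h : u ∈ floodRegion G col w) : u ∈ floodRegion G col' w := by
  obtain ⟨p, hp⟩ := h
  obtain ⟨q, hq, hqv⟩ :=
    exists_avoid_walk col K I hunion hclique hindep hv p.length w u hw hu p le_rfl hp
  refine ⟨q, fun x hx => ?_⟩
  have hxv : x ≠ v := fun hh => hqv (hh ▸ hx)
  rw [← hagree x hxv, ← hagree w hw]
  exact hq x hx

lemma floodStep_transfer (col col' : V → C) (K I : Set V)
    (hunion : K ∪ I = Set.univ)
    (hclique : G.IsClique K)
    (hindep : ∀ u ∈ I, ∀ w ∈ I, ¬ G.Adj u w) {v : V} (hv : v ∈ I)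
    (hagree : ∀ u, u ≠ v → col u = col' u) {w : V} (hw : w ≠ v) (d : C) :
    ∀ u, u ≠ v → floodStep G col w d u = floodStep G col' w d u := by
  intro u hu
  have hagree' : ∀ u, u ≠ v → col' u = col u := fun u hu => (hagree u hu).symm
  unfold floodStep
  by_cases h : u ∈ floodRegion G col w
  · rw [if_pos h,
      if_pos (floodRegion_transfer col col' K I hunion hclique hindep hv hagree hw hu h)]
  · rw [if_neg h, if_neg (fun h' =>
      h (floodRegion_transfer col' col K I hunion hclique hindep hv hagree' hw hu h'))]
    exact hagree u hu

lemma floodSeq_transfer (col col' : V → C) (K I : Set V)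
    (hunion : K ∪ I = Set.univ) (hdisj : Disjoint K I)
    (hclique : G.IsClique K)
    (hindep : ∀ u ∈ I, ∀ w ∈ I, ¬ G.Adj u w) {v : V} (hv : v ∈ I) :
    ∀ (L : List (V × C)), (∀ op ∈ L, op.1 ∈ K) →
      (∀ u, u ≠ v → col u = col' u) →
      ∀ u, u ≠ v → floodSeq G col L u = floodSeq G col' L u := by
  intro L
  induction L generalizing col col' with
  | nil => intro _ hagree u hu; exact hagree u hu
  | cons op rest ih =>
    intro hK hagree u hu
    have hopK : op.1 ∈ K := hK op (by simp)
    have hopv : op.1 ≠ v := fun hh => Set.disjoint_left.mp hdisj hopK (hh ▸ hv)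
    have hagree' : ∀ u, u ≠ v →
        floodStep G col op.1 op.2 u = floodStep G col' op.1 op.2 u :=
      floodStep_transfer col col' K I hunion hclique hindep hv hagree hopv op.2
    exact ih _ _ (fun op' h => hK op' (List.mem_cons_of_mem _ h)) hagree' u hu

lemma floodSeq_append (col : V → C) (L₁ L₂ : List (V × C)) :
    floodSeq G col (L₁ ++ L₂) = floodSeq G (floodSeq G col L₁) L₂ := by
  induction L₁ generalizing col with
  | nil => rfl
  | cons op rest ih => exact ih _

lemma floodSeq_const_of (c0 : C) :
    ∀ (L : List (V × C)) (col : V → C), (∀ op ∈ L, op.2 = c0) →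
      ∀ u, (col u = c0 ∨ ∃ op ∈ L, op.1 = u) → floodSeq G col L u = c0 := by
  intro L
  induction L with
  | nil =>
    intro col _ u hu
    rcases hu with h | ⟨op, h, _⟩
    · exact h
    · simp at h
  | cons op rest ih =>
    intro col hc u hu
    have hop2 : op.2 = c0 := hc op (by simp)
    have hstep : ∀ z, col z = c0 → floodStep G col op.1 op.2 z = c0 := by
      intro z hz
      unfold floodStep
      split
      · exact hop2
      · exact hz
    rcases hu with h | ⟨op', hmem, hfst⟩
    · exact ih _ (fun o ho => hc o (by simp [ho])) u (Or.inl (hstep u h))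
    · rcases List.mem_cons.mp hmem with rfl | hmem'
      · have : floodStep G col op'.1 op'.2 u = c0 := by
          unfold floodStep
          rw [if_pos (hfst ▸ mem_floodRegion_self col op'.1), hop2]
        exact ih _ (fun o ho => hc o (by simp [ho])) u (Or.inl this)
      · exact ih _ (fun o ho => hc o (by simp [ho])) u (Or.inr ⟨op', hmem', hfst⟩)

end Helpers

/-- Key lemma: any solution on a split graph can be converted to one of no greater
length all of whose moves are at clique vertices. -/
lemma key_lemma {V C : Type*} [Fintype V] (G : SimpleGraph V) (hG : G.Connected)
    (K I : Set V)
    (hunion : K ∪ I = Set.univ) (hdisj : Disjoint K I)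
    (hKne : K.Nonempty)
    (hclique : G.IsClique K)
    (hindep : ∀ u ∈ I, ∀ w ∈ I, ¬ G.Adj u w) :
    ∀ n (ops : List (V × C)), ops.length ≤ n → ∀ col : V → C,
      IsFloodSolution G col ops →
      ∃ ops' : List (V × C), IsFloodSolution G col ops' ∧
        (∀ op ∈ ops', op.1 ∈ K) ∧ ops'.length ≤ ops.length := by
  obtain ⟨k₀, hk₀⟩ := hKne
  intro n
  induction n with
  | zero =>
    intro ops hlen col hsol
    have : ops = [] := List.length_eq_zero_iff.mp (Nat.le_zero.mp hlen)
    subst this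
    exact ⟨[], hsol, by simp, le_refl _⟩
  | succ n ih =>
    intro ops hlen col hsol
    cases ops with
    | nil => exact ⟨[], hsol, by simp, le_refl _⟩
    | cons op B =>
      obtain ⟨v, c⟩ := op
      set col' := floodStep G col v c with hcol'
      have hsolB : IsFloodSolution G col' B := hsol
      have hlenB : B.length ≤ n := by simp at hlen; omega
      by_cases hcase : ∃ w, w ∈ floodRegion G col v ∧ w ∈ K
      · obtain ⟨w, hwr, hwK⟩ := hcase
        obtain ⟨B', hB'sol, hB'K, hB'len⟩ := ih B hlenB col' hsolB
        refine ⟨(w, c) :: B', ?_, ?_, ?_⟩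
        · obtain ⟨cf, hcf⟩ := hB'sol
          refine ⟨cf, fun u => ?_⟩
          show floodSeq G (floodStep G col w c) B' u = cf
          rw [floodStep_eq_of_mem col hwr c]
          exact hcf u
        · intro o ho
          rcases List.mem_cons.mp ho with rfl | h
          · exact hwK
          · exact hB'K o h
        · simpa using Nat.succ_le_succ hB'len
      · -- region of v contains no clique vertex, so v ∈ I and the region is {v}
        push_neg at hcase
        have hvI : v ∈ I := by
          have : v ∈ K ∪ I := hunion ▸ Set.mem_univ v
          rcases this with h | h
          · exact absurd h (hcase v (mem_floodRegion_self col v))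
          · exact h
        have hagree : ∀ u, u ≠ v → col u = col' u := by
          intro u hu
          have hur : u ∉ floodRegion G col v := by
            rintro ⟨p, hp⟩
            cases p with
            | nil => exact hu rfl
            | cons h p' =>
              rename_i x
              have hxK : x ∈ K := by
                have : x ∈ K ∪ I := hunion ▸ Set.mem_univ x
                rcases this with hh | hh
                · exact hh
                · exact absurd h.symm (hindep x hh v hvI)
              have hxr : x ∈ floodRegion G col v :=
                ⟨SimpleGraph.Walk.cons h SimpleGraph.Walk.nil, by
                  intro z hz
                  simp only [SimpleGraph.Walk.support_cons,
                    SimpleGraph.Walk.support_nil, List.mem_cons,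
                    List.mem_singleton] at hz
                  rcases hz with h1 | h2 | h'
                  · rw [h1]
                  · rw [h2]; exact hp x (by simp)
                  · simp at h'⟩
              exact hcase x hxr hxK
          rw [hcol']
          unfold floodStep
          rw [if_neg hur]
        obtain ⟨B', hB'sol, hB'K, hB'len⟩ := ih B hlenB col' hsolB
        obtain ⟨cf, hcf⟩ := hB'sol
        set col₁ := floodSeq G col B' with hcol₁
        have hsame : ∀ u, u ≠ v → col₁ u = cf := by
          intro u hu
          rw [hcol₁, floodSeq_transfer col col' K I hunion hdisj hclique hindep hvI
            B' hB'K hagree u hu]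
          exact hcf u
        set a := col₁ v with ha
        refine ⟨B' ++ [(k₀, a)], ?_, ?_, ?_⟩
        · refine ⟨a, fun u => ?_⟩
          rw [floodSeq_append, ← hcol₁]
          show floodStep G col₁ k₀ a u = a
          have hk₀v : k₀ ≠ v := fun hh => Set.disjoint_left.mp hdisj hk₀ (hh ▸ hvI)
          by_cases hu : u = v
          · subst hu
            unfold floodStep
            split
            · rfl
            · rfl
          · have hmem : u ∈ floodRegion G col₁ k₀ := by
              have hcolk₀ : col₁ k₀ = cf := hsame k₀ hk₀v
              have huKI : u ∈ K ∪ I := hunion ▸ Set.mem_univ u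
              rcases huKI with huK | huI
              · by_cases huk₀ : u = k₀
                · rw [huk₀]; exact mem_floodRegion_self col₁ k₀
                · refine ⟨SimpleGraph.Walk.cons (hclique hk₀ huK (Ne.symm huk₀))
                    SimpleGraph.Walk.nil, ?_⟩
                  intro z hz
                  simp only [SimpleGraph.Walk.support_cons,
                    SimpleGraph.Walk.support_nil, List.mem_cons,
                    List.mem_singleton] at hz
                  rcases hz with h1 | h2 | h'
                  · rw [h1]
                  · rw [h2, hsame u hu, hcolk₀]
                  · simp at h'
              · -- u ∈ I, u ≠ v : find its clique neighbor
                have huk₀ : u ≠ k₀ := fun hh => Set.disjoint_left.mp hdisj (hh ▸ hk₀) huI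
                obtain ⟨p⟩ := hG.preconnected u k₀
                cases p with
                | nil => exact absurd rfl huk₀
                | cons h p' =>
                  rename_i x
                  have hxK : x ∈ K := by
                    have : x ∈ K ∪ I := hunion ▸ Set.mem_univ x
                    rcases this with hh | hh
                    · exact hh
                    · exact absurd h (hindep u huI x hh)
                  have hxv : x ≠ v := fun hh => Set.disjoint_left.mp hdisj hxK (hh ▸ hvI)
                  by_cases hxk₀ : x = k₀
                  · refine ⟨SimpleGraph.Walk.cons (hxk₀ ▸ h.symm) SimpleGraph.Walk.nil, ?_⟩
                    intro z hz
                    simp only [SimpleGraph.Walk.support_cons,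
                      SimpleGraph.Walk.support_nil, List.mem_cons,
                      List.mem_singleton] at hz
                    rcases hz with h1 | h2 | h'
                    · rw [h1]
                    · rw [h2, hsame u hu, hcolk₀]
                    · simp at h'
                  · refine ⟨SimpleGraph.Walk.cons (hclique hk₀ hxK (Ne.symm hxk₀))
                      (SimpleGraph.Walk.cons h.symm SimpleGraph.Walk.nil), ?_⟩
                    intro z hz
                    simp only [SimpleGraph.Walk.support_cons,
                      SimpleGraph.Walk.support_nil, List.mem_cons,
                      List.mem_singleton] at hz
                    rcases hz with h1 | h2 | h3 | h'
                    · rw [h1]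
                    · rw [h2, hsame x hxv, hcolk₀]
                    · rw [h3, hsame u hu, hcolk₀]
                    · simp at h'
            unfold floodStep
            rw [if_pos hmem]
        · intro o ho
          rcases List.mem_append.mp ho with h | h
          · exact hB'K o h
          · simp only [List.mem_singleton] at h
            rw [h]
            exact hk₀
        · simp only [List.length_append, List.length_cons, List.length_nil]
          simpa using Nat.succ_le_succ hB'len

/-- Let `G` be a connected precolored split graph whose vertex set is
partitioned into a nonempty clique `K` and an independent set `I`. Then there is a
solution of the free flooding game on `G` of minimum length in which every coloring
operation recolors a vertex of `K`. -/
theorem splitGraph_exists_optimal_clique_solution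
    {V C : Type*} [Fintype V] (G : SimpleGraph V) (hG : G.Connected)
    (col : V → C) (K I : Set V)
    (hunion : K ∪ I = Set.univ) (hdisj : Disjoint K I)
    (hKne : K.Nonempty)
    (hclique : G.IsClique K)
    (hindep : ∀ u ∈ I, ∀ w ∈ I, ¬ G.Adj u w) :
    ∃ ops : List (V × C),
      IsFloodSolution G col ops ∧
      (∀ op ∈ ops, op.1 ∈ K) ∧
      ∀ ops' : List (V × C), IsFloodSolution G col ops' →
        ops.length ≤ ops'.length := by
  obtain ⟨k₀, hk₀⟩ := hKne
  -- a solution always exists: flood every vertex to the color of `k₀`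
  have hex : ∃ ops : List (V × C), IsFloodSolution G col ops := by
    refine ⟨(Finset.univ.toList (α := V)).map (fun u => (u, col k₀)), col k₀, fun u => ?_⟩
    apply floodSeq_const_of
    · intro op hop
      simp only [List.mem_map] at hop
      obtain ⟨x, _, rfl⟩ := hop
      rfl
    · exact Or.inr ⟨(u, col k₀), List.mem_map.mpr ⟨u, by simp, rfl⟩, rfl⟩
  have hn : ∃ m : ℕ, ∃ ops : List (V × C), IsFloodSolution G col ops ∧ ops.length = m := by
    obtain ⟨ops, hops⟩ := hex
    exact ⟨ops.length, ops, hops, rfl⟩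
  obtain ⟨ops₀, hsol₀, hlen₀⟩ := Nat.find_spec hn
  obtain ⟨ops', h1, h2, h3⟩ := key_lemma G hG K I hunion hdisj ⟨k₀, hk₀⟩ hclique hindep
    ops₀.length ops₀ le_rfl col hsol₀
  refine ⟨ops', h1, h2, fun ops'' hops'' => ?_⟩
  have hfind : Nat.find hn ≤ ops''.length := Nat.find_min' hn ⟨ops'', hops'', rfl⟩
  calc ops'.length ≤ ops₀.length := h3
    _ = Nat.find hn := hlen₀
    _ ≤ ops''.length := hfind
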